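/- A linear map V ∈ C^{N×K} (N ≥ K) is an isometry with respect to the chordal distance—that is, d(Vb₁, Vb₂) = d(b₁, b₂) for all nonzero b₁, b₂ ∈ C^K with Vb₁, Vb₂ nonzero—if and only if V^H V = c·I_K for some c > 0. -/

import Mathlib

open Matrix

/-- Squared Euclidean norm of a complex vector. -/
noncomputable def nsq {n : ℕ} (x : Fin n → ℂ) : ℝ := (star x ⬝ᵥ x).re

/-- Squared chordal distance between two (nonzero) complex vectors. -/
noncomputable def chordalSq {n : ℕ} (x y : Fin n → ℂ) : ℝ :=
  1 - (‖star x ⬝ᵥ y‖) ^ 2 / (nsq x * nsq y)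

lemma nsq_eq_sum {n : ℕ} (x : Fin n → ℂ) : nsq x = ∑ i, Complex.normSq (x i) := by
  simp only [nsq, dotProduct, Pi.star_apply, Complex.star_def, Complex.re_sum]
  exact Finset.sum_congr rfl fun i _ => by
    rw [← Complex.normSq_eq_conj_mul_self, Complex.ofReal_re]

lemma star_dot_self_eq {n : ℕ} (x : Fin n → ℂ) :
    star x ⬝ᵥ x = ((nsq x : ℝ) : ℂ) := by
  rw [nsq_eq_sum, Complex.ofReal_sum]
  simp only [dotProduct, Pi.star_apply, Complex.star_def]
  exact Finset.sum_congr rfl fun i _ => by rw [← Complex.normSq_eq_conj_mul_self]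

lemma nsq_pos {n : ℕ} {x : Fin n → ℂ} (hx : x ≠ 0) : 0 < nsq x := by
  rw [nsq_eq_sum]
  obtain ⟨i, hi⟩ : ∃ i, x i ≠ 0 := by
    by_contra h
    push_neg at h
    exact hx (funext h)
  exact Finset.sum_pos' (fun j _ => Complex.normSq_nonneg _)
    ⟨i, Finset.mem_univ i, Complex.normSq_pos.mpr hi⟩

lemma dot_mulVec_eq {N K : ℕ} (V : Matrix (Fin N) (Fin K) ℂ) (b₁ b₂ : Fin K → ℂ) :
    star (V.mulVec b₁) ⬝ᵥ V.mulVec b₂ = star b₁ ⬝ᵥ (Vᴴ * V).mulVec b₂ := by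
  rw [star_mulVec, ← Matrix.dotProduct_mulVec, Matrix.mulVec_mulVec]

/-- A full-column-rank linear map `V` is an isometry for the chordal distance
iff `Vᴴ V` is a positive multiple of the identity. -/
theorem chordal_isometry_iff {N K : ℕ} (hNK : K ≤ N)
    (V : Matrix (Fin N) (Fin K) ℂ) (hrank : V.rank = K) :
    (∀ b₁ b₂ : Fin K → ℂ, b₁ ≠ 0 → b₂ ≠ 0 →
        V.mulVec b₁ ≠ 0 → V.mulVec b₂ ≠ 0 →
        chordalSq (V.mulVec b₁) (V.mulVec b₂) = chordalSq b₁ b₂)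
    ↔ (∃ c : ℝ, 0 < c ∧ Vᴴ * V = (c : ℂ) • 1) := by
  constructor
  · intro hiso
    have hker : LinearMap.ker V.mulVecLin = ⊥ := by
      have h2 := V.mulVecLin.finrank_range_add_finrank_ker
      rw [show Module.finrank ℂ (LinearMap.range V.mulVecLin) = V.rank from rfl, hrank,
        Module.finrank_fin_fun] at h2
      exact Submodule.finrank_eq_zero.mp (by omega)
    have hinj : Function.Injective V.mulVecLin := LinearMap.ker_eq_bot.mp hker
    have hVne : ∀ b : Fin K → ℂ, b ≠ 0 → V.mulVec b ≠ 0 := by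
      intro b hb h0
      exact hb (hinj (by simpa [Matrix.mulVecLin_apply] using h0))
    set G := Vᴴ * V with hGdef
    have hkey : ∀ b₁ b₂ : Fin K → ℂ, b₁ ≠ 0 → b₂ ≠ 0 → star b₁ ⬝ᵥ b₂ = 0 →
        star b₁ ⬝ᵥ G.mulVec b₂ = 0 := by
      intro b₁ b₂ h1 h2 horth
      have hc := hiso b₁ b₂ h1 h2 (hVne _ h1) (hVne _ h2)
      have hr : chordalSq b₁ b₂ = 1 := by simp [chordalSq, horth]
      rw [hr] at hc
      have hd : (‖star (V.mulVec b₁) ⬝ᵥ V.mulVec b₂‖) ^ 2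
          / (nsq (V.mulVec b₁) * nsq (V.mulVec b₂)) = 0 := by
        unfold chordalSq at hc; linarith
      have hden : nsq (V.mulVec b₁) * nsq (V.mulVec b₂) ≠ 0 :=
        ne_of_gt (mul_pos (nsq_pos (hVne _ h1)) (nsq_pos (hVne _ h2)))
      have habs : (‖star (V.mulVec b₁) ⬝ᵥ V.mulVec b₂‖) ^ 2 = 0 :=
        (div_eq_zero_iff.mp hd).resolve_right hden
      have hz : star (V.mulVec b₁) ⬝ᵥ V.mulVec b₂ = 0 := by
        have := pow_eq_zero_iff (n := 2) (by norm_num) |>.mp habs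
        exact norm_eq_zero.mp this
      rw [dot_mulVec_eq] at hz
      exact hz
    have hstar : ∀ i : Fin K, star (Pi.single i (1 : ℂ) : Fin K → ℂ) = Pi.single i 1 := by
      intro i
      ext k
      by_cases h : k = i <;> simp [Pi.single_apply, h]
    have he_ne : ∀ i : Fin K, (Pi.single i (1 : ℂ) : Fin K → ℂ) ≠ 0 := by
      intro i h
      have := congrFun h i
      simp at this
    have hoff : ∀ i j : Fin K, i ≠ j → G i j = 0 := by
      intro i j hij
      have h := hkey (Pi.single i 1) (Pi.single j 1) (he_ne i) (he_ne j) (by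
        rw [hstar, single_dotProduct, one_mul]; simp [Pi.single_apply, hij])
      rw [hstar, single_dotProduct, one_mul] at h
      simpa using h
    have hdiag : ∀ i j : Fin K, G i i = G j j := by
      intro i j
      by_cases hij : i = j
      · rw [hij]
      · have hne1 : (Pi.single i 1 - Pi.single j 1 : Fin K → ℂ) ≠ 0 := by
          intro h
          have := congrFun h i
          simp [Pi.single_apply, hij] at this
        have hne2 : (Pi.single i 1 + Pi.single j 1 : Fin K → ℂ) ≠ 0 := by
          intro h
          have := congrFun h i
          simp [Pi.single_apply, hij] at this
        have h := hkey _ _ hne1 hne2 (by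
          rw [star_sub, hstar, hstar, sub_dotProduct, dotProduct_add,
            dotProduct_add]
          simp [single_dotProduct, Pi.single_apply, hij, Ne.symm hij])
        rw [star_sub, hstar, hstar, sub_dotProduct, single_dotProduct,
          single_dotProduct, one_mul, one_mul, Matrix.mulVec_add] at h
        simp only [Pi.add_apply, Matrix.mulVec_single, mul_one, MulOpposite.op_one, one_smul,
          Matrix.col_apply] at h
        have h1 := hoff i j hij
        have h2 := hoff j i (Ne.symm hij)
        rw [h1, h2] at h
        ring_nf at h
        linear_combination h
    rcases Nat.eq_zero_or_pos K with hK | hK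
    · subst hK
      exact ⟨1, one_pos, by ext i j; exact i.elim0⟩
    · set i0 : Fin K := ⟨0, hK⟩
      set w : Fin N → ℂ := V.mulVec (Pi.single i0 1) with hw
      have hwne : w ≠ 0 := hVne _ (he_ne i0)
      have hG00 : G i0 i0 = ((nsq w : ℝ) : ℂ) := by
        rw [← star_dot_self_eq, hw, dot_mulVec_eq, hstar, single_dotProduct, one_mul]
        simp [← hGdef]
      refine ⟨nsq w, nsq_pos hwne, ?_⟩
      ext i j
      by_cases hij : i = j
      · subst hij
        rw [Matrix.smul_apply, Matrix.one_apply_eq, smul_eq_mul, mul_one, hdiag i i0, hG00]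
      · rw [hoff i j hij, Matrix.smul_apply, Matrix.one_apply_ne hij, smul_eq_mul, mul_zero]
  · rintro ⟨c, hc, hV⟩ b₁ b₂ h1 h2 _ _
    have hdot : ∀ u v : Fin K → ℂ,
        star (V.mulVec u) ⬝ᵥ V.mulVec v = (c : ℂ) * (star u ⬝ᵥ v) := by
      intro u v
      rw [dot_mulVec_eq, hV, Matrix.smul_mulVec, Matrix.one_mulVec,
        dotProduct_smul, smul_eq_mul]
    have hn : ∀ u : Fin K → ℂ, nsq (V.mulVec u) = c * nsq u := by
      intro u
      unfold nsq
      rw [hdot u u, Complex.re_ofReal_mul]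
    unfold chordalSq
    rw [hdot, hn, hn]
    congr 1
    rw [norm_mul, Complex.norm_real, Real.norm_eq_abs, abs_of_pos hc, mul_pow]
    rw [show c * nsq b₁ * (c * nsq b₂) = c ^ 2 * (nsq b₁ * nsq b₂) by ring]
    exact mul_div_mul_left _ _ (by positivity)
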